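/- Let f, h : [0,1] → ℝ with h continuous, h(0) = 0, h(1) ≥ 0, and suppose h is differentiable except at finitely many points, with sign of h' equal (where defined) to the sign of the derivative of H^N_m − H^N_{m'} (m > m' ≥ 1), which is: negative then positive then negative on (0,1) when m < N, and negative then positive when m = N. Then there exists t* ∈ [0,1] such that h(t) ≤ 0 on [0,t*] and h(t) ≥ 0 on [t*,1]. -/

import Mathlib

set_option maxHeartbeats 1600000


open Set

/-- `H N m t = C(N,m) t^m (1-t)^(N-m)`. -/
noncomputable def H (N m : ℕ) (t : ℝ) : ℝ := (N.choose m : ℝ) * t ^ m * (1 - t) ^ (N - m)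





lemma signAux_nonpos {x y : ℝ} (hs : Real.sign x = Real.sign y) (hy : y ≤ 0) : x ≤ 0 := by
  by_contra hx
  push_neg at hx
  rw [Real.sign_of_pos hx] at hs
  rcases lt_or_eq_of_le hy with h | h
  · rw [Real.sign_of_neg h] at hs; norm_num at hs
  · rw [h, Real.sign_zero] at hs; norm_num at hs

lemma signAux_nonneg {x y : ℝ} (hs : Real.sign x = Real.sign y) (hy : 0 ≤ y) : 0 ≤ x := by
  by_contra hx
  push_neg at hx
  rw [Real.sign_of_neg hx] at hs
  rcases lt_or_eq_of_le hy with h | h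
  · rw [Real.sign_of_pos h] at hs; norm_num at hs
  · rw [← h, Real.sign_zero] at hs; norm_num at hs

lemma monoAux (f : ℝ → ℝ) (S : Finset ℝ) :
    ∀ a b : ℝ, ContinuousOn f (Icc a b) →
    (∀ t ∈ Ioo a b, t ∉ S → DifferentiableAt ℝ f t) →
    (∀ t ∈ Ioo a b, t ∉ S → 0 ≤ deriv f t) → MonotoneOn f (Icc a b) := by
  classical
  induction S using Finset.induction_on with
  | empty =>
    intro a b hc hd h'
    exact monotoneOn_of_deriv_nonneg (convex_Icc a b) hc
      (by rw [interior_Icc]; exact fun t ht => (hd t ht (by simp)).differentiableWithinAt)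
      (by rw [interior_Icc]; exact fun t ht => h' t ht (by simp))
  | @insert s S' hs IH =>
    intro a b hc hd h'
    by_cases hmem : s ∈ Ioo a b
    · have IH1 : MonotoneOn f (Icc a s) := by
        refine IH a s (hc.mono (Icc_subset_Icc le_rfl hmem.2.le)) ?_ ?_
        · intro t ht hts
          exact hd t ⟨ht.1, ht.2.trans hmem.2⟩ (by simp [Finset.mem_insert, hts, ne_of_lt ht.2])
        · intro t ht hts
          exact h' t ⟨ht.1, ht.2.trans hmem.2⟩ (by simp [Finset.mem_insert, hts, ne_of_lt ht.2])
      have IH2 : MonotoneOn f (Icc s b) := by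
        refine IH s b (hc.mono (Icc_subset_Icc hmem.1.le le_rfl)) ?_ ?_
        · intro t ht hts
          exact hd t ⟨hmem.1.trans ht.1, ht.2⟩
            (by simp [Finset.mem_insert, hts, (ne_of_gt ht.1)])
        · intro t ht hts
          exact h' t ⟨hmem.1.trans ht.1, ht.2⟩
            (by simp [Finset.mem_insert, hts, (ne_of_gt ht.1)])
      intro x hx y hy hxy
      rcases le_total y s with h1 | h1
      · exact IH1 ⟨hx.1, hxy.trans h1⟩ ⟨hy.1, h1⟩ hxy
      · rcases le_total x s with h2 | h2
        · exact le_trans (IH1 ⟨hx.1, h2⟩ ⟨hmem.1.le, le_rfl⟩ h2)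
            (IH2 ⟨le_rfl, hmem.2.le⟩ ⟨h1, hy.2⟩ h1)
        · exact IH2 ⟨h2, hx.2⟩ ⟨h1, hy.2⟩ hxy
    · refine IH a b hc ?_ ?_
      · intro t ht hts
        exact hd t ht (by simp [Finset.mem_insert, hts]; rintro rfl; exact hmem ht)
      · intro t ht hts
        exact h' t ht (by simp [Finset.mem_insert, hts]; rintro rfl; exact hmem ht)

lemma antiAux (f : ℝ → ℝ) (S : Finset ℝ)
    (a b : ℝ) (hc : ContinuousOn f (Icc a b))
    (hd : ∀ t ∈ Ioo a b, t ∉ S → DifferentiableAt ℝ f t)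
    (h' : ∀ t ∈ Ioo a b, t ∉ S → deriv f t ≤ 0) : AntitoneOn f (Icc a b) := by
  have : MonotoneOn (fun x => -f x) (Icc a b) := by
    refine monoAux _ S a b (hc.neg) (fun t ht hts => (hd t ht hts).neg) ?_
    intro t ht hts
    rw [deriv.fun_neg]
    linarith [h' t ht hts]
  intro x hx y hy hxy
  have := this hx hy hxy
  simpa using this

lemma cmp_left {c1 c0 K Nr M M' : ℝ} {k e : ℕ} {s t : ℝ}
    (hc1 : 0 < c1) (hc0 : 0 < c0) (hK0 : 0 ≤ K) (hKN : K ≤ Nr)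
    (hs : 0 < s) (hst : s < t) (ht1 : t < 1)
    (hsz : Nr * s < M') (htz : Nr * t ≤ M') (hKt : K * t < M) (hM'M : M' ≤ M)
    (hΦs : c0 * (1 - s) ^ e * (M' - Nr * s) < c1 * s ^ k * (M - K * s)) :
    c0 * (1 - t) ^ e * (M' - Nr * t) < c1 * t ^ k * (M - K * t) := by
  have ht0 : 0 < t := hs.trans hst
  have h1t : 0 < 1 - t := by linarith
  have h1s : 0 < 1 - s := by linarith
  have hKs : K * s < M := by nlinarith
  have hpk : s ^ k ≤ t ^ k := pow_le_pow_left₀ hs.le hst.le k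
  have hpe : (1 - t) ^ e ≤ (1 - s) ^ e := pow_le_pow_left₀ h1t.le (by linarith) e
  have hBs : 0 < c0 * (1 - s) ^ e * (M' - Nr * s) :=
    mul_pos (mul_pos hc0 (pow_pos h1s e)) (by linarith)
  have hAt : 0 < c1 * t ^ k * (M - K * t) :=
    mul_pos (mul_pos hc1 (pow_pos ht0 k)) (by linarith)
  by_cases hBt : 0 < M' - Nr * t
  · have hM'0 : 0 < M' := by nlinarith
    have hlin : (M - K * s) * (M' - Nr * t) ≤ (M - K * t) * (M' - Nr * s) := by
      nlinarith [mul_nonneg (show (0:ℝ) ≤ t - s by linarith)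
        (show (0:ℝ) ≤ M * Nr - K * M' by nlinarith)]
    have hstep1 : s ^ k * (1 - t) ^ e ≤ t ^ k * (1 - s) ^ e :=
      mul_le_mul hpk hpe (pow_nonneg h1t.le e) (pow_nonneg ht0.le k)
    have hstep2 : (s ^ k * (1 - t) ^ e) * ((M - K * s) * (M' - Nr * t))
        ≤ (t ^ k * (1 - s) ^ e) * ((M - K * t) * (M' - Nr * s)) :=
      mul_le_mul hstep1 hlin
        (mul_nonneg (by linarith) hBt.le)
        (mul_nonneg (pow_nonneg ht0.le k) (pow_nonneg h1s.le e))
    have hcross : (c1 * s ^ k * (M - K * s)) * (c0 * (1 - t) ^ e * (M' - Nr * t))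
        ≤ (c1 * t ^ k * (M - K * t)) * (c0 * (1 - s) ^ e * (M' - Nr * s)) := by
      nlinarith [mul_pos hc1 hc0, hstep2]
    have hBt' : 0 < c0 * (1 - t) ^ e * (M' - Nr * t) :=
      mul_pos (mul_pos hc0 (pow_pos h1t e)) hBt
    have h7 : (c0 * (1 - t) ^ e * (M' - Nr * t)) * (c0 * (1 - s) ^ e * (M' - Nr * s))
        < (c1 * s ^ k * (M - K * s)) * (c0 * (1 - t) ^ e * (M' - Nr * t)) := by
      nlinarith [mul_pos hBt' (sub_pos.2 hΦs)]
    have h8 : (c0 * (1 - t) ^ e * (M' - Nr * t)) * (c0 * (1 - s) ^ e * (M' - Nr * s))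
        < (c1 * t ^ k * (M - K * t)) * (c0 * (1 - s) ^ e * (M' - Nr * s)) :=
      lt_of_lt_of_le h7 hcross
    exact lt_of_mul_lt_mul_right h8 hBs.le
  · push_neg at hBt
    have : c0 * (1 - t) ^ e * (M' - Nr * t) ≤ 0 :=
      mul_nonpos_of_nonneg_of_nonpos (mul_nonneg hc0.le (pow_nonneg h1t.le e)) hBt
    linarith

lemma cmp_right {c1 c0 Nr M M' : ℝ} {k e : ℕ} {s t : ℝ}
    (hc1 : 0 < c1) (hc0 : 0 < c0) (hN : 0 < Nr)
    (hs : 0 < s) (hst : s < t) (ht1 : t < 1)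
    (hsz' : M ≤ Nr * s) (hM'M : M' < M)
    (hΦt : c0 * (1 - t) ^ e * (M' - Nr * t) < c1 * t ^ k * (M - Nr * t)) :
    c0 * (1 - s) ^ e * (M' - Nr * s) < c1 * s ^ k * (M - Nr * s) := by
  have ht0 : 0 < t := hs.trans hst
  have h1t : 0 < 1 - t := by linarith
  have h1s : 0 < 1 - s := by linarith
  have htz' : M < Nr * t := by nlinarith
  have hA't : c1 * t ^ k * (Nr * t - M) < c0 * (1 - t) ^ e * (Nr * t - M') := by
    nlinarith [hΦt]
  have hpk : s ^ k ≤ t ^ k := pow_le_pow_left₀ hs.le hst.le k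
  have hpe : (1 - t) ^ e ≤ (1 - s) ^ e := pow_le_pow_left₀ h1t.le (by linarith) e
  have hlin : (Nr * s - M) * (Nr * t - M') ≤ (Nr * t - M) * (Nr * s - M') := by
    nlinarith [mul_nonneg (show (0:ℝ) ≤ t - s by linarith)
      (show (0:ℝ) ≤ Nr * (M - M') by nlinarith)]
  have hstep1 : s ^ k * (1 - t) ^ e ≤ t ^ k * (1 - s) ^ e :=
    mul_le_mul hpk hpe (pow_nonneg h1t.le e) (pow_nonneg ht0.le k)
  have hstep2 : (s ^ k * (1 - t) ^ e) * ((Nr * s - M) * (Nr * t - M'))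
      ≤ (t ^ k * (1 - s) ^ e) * ((Nr * t - M) * (Nr * s - M')) :=
    mul_le_mul hstep1 hlin
      (mul_nonneg (by linarith) (by nlinarith))
      (mul_nonneg (pow_nonneg ht0.le k) (pow_nonneg h1s.le e))
  have hcross : (c1 * s ^ k * (Nr * s - M)) * (c0 * (1 - t) ^ e * (Nr * t - M'))
      ≤ (c1 * t ^ k * (Nr * t - M)) * (c0 * (1 - s) ^ e * (Nr * s - M')) := by
    nlinarith [mul_pos hc1 hc0, hstep2]
  have hB't : 0 < c0 * (1 - t) ^ e * (Nr * t - M') :=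
    mul_pos (mul_pos hc0 (pow_pos h1t e)) (by nlinarith)
  have hB's : 0 < c0 * (1 - s) ^ e * (Nr * s - M') :=
    mul_pos (mul_pos hc0 (pow_pos h1s e)) (by nlinarith)
  have h7 : (c1 * t ^ k * (Nr * t - M)) * (c0 * (1 - s) ^ e * (Nr * s - M'))
      < (c0 * (1 - s) ^ e * (Nr * s - M')) * (c0 * (1 - t) ^ e * (Nr * t - M')) := by
    nlinarith [mul_pos hB's (sub_pos.2 hA't)]
  have h8 : (c1 * s ^ k * (Nr * s - M)) * (c0 * (1 - t) ^ e * (Nr * t - M'))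
      < (c0 * (1 - s) ^ e * (Nr * s - M')) * (c0 * (1 - t) ^ e * (Nr * t - M')) :=
    lt_of_le_of_lt hcross h7
  have h9 : c1 * s ^ k * (Nr * s - M) < c0 * (1 - s) ^ e * (Nr * s - M') :=
    lt_of_mul_lt_mul_right h8 hB't.le
  nlinarith [h9, sq_nonneg (1:ℝ)]


lemma hasDerivAt_H (N j : ℕ) (t : ℝ) :
    HasDerivAt (H N j)
      ((N.choose j : ℝ) * ((j : ℝ) * t ^ (j - 1) * (1 - t) ^ (N - j)
        - ((N - j : ℕ) : ℝ) * t ^ j * (1 - t) ^ (N - j - 1))) t := by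
  have h1 : HasDerivAt (fun s : ℝ => s ^ j) ((j : ℝ) * t ^ (j - 1)) t := hasDerivAt_pow j t
  have h2 : HasDerivAt (fun s : ℝ => (1 - s) ^ (N - j))
      (((N - j : ℕ) : ℝ) * (1 - t) ^ (N - j - 1) * (-1)) t := by
    have hb : HasDerivAt (fun s : ℝ => 1 - s) (-1) t := (hasDerivAt_id t).const_sub 1
    exact hb.pow _
  have h3 : HasDerivAt (fun s : ℝ => (N.choose j : ℝ) * (s ^ j * (1 - s) ^ (N - j))) _ t :=
    (h1.mul h2).const_mul ((N.choose j : ℝ))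
  have heq : (fun s : ℝ => (N.choose j : ℝ) * (s ^ j * (1 - s) ^ (N - j))) = H N j := by
    funext s; simp [H, mul_assoc]
  rw [heq] at h3
  convert h3 using 1
  ring

lemma deriv_formula (N m m' : ℕ) (hm'1 : 1 ≤ m') (hmm' : m' < m) (hmN : m ≤ N) (t : ℝ) :
    deriv (fun s => H N m s - H N m' s) t
      = t ^ (m' - 1) * (1 - t) ^ (N - m - 1) *
        ((N.choose m : ℝ) * t ^ (m - m') * ((m : ℝ) - (if m = N then 0 else (N : ℝ)) * t)
          - (N.choose m' : ℝ) * (1 - t) ^ ((N - m' - 1) - (N - m - 1))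
            * ((m' : ℝ) - (N : ℝ) * t)) := by
  have hD := ((hasDerivAt_H N m t).sub (hasDerivAt_H N m' t)).deriv
  rw [show (fun s => H N m s - H N m' s) = H N m - H N m' from rfl, hD]
  obtain ⟨p, rfl⟩ : ∃ p, m' = p + 1 := ⟨m' - 1, by omega⟩
  obtain ⟨j, rfl⟩ : ∃ j, m = (p + 1) + (j + 1) := ⟨m - p - 2, by omega⟩
  by_cases hc : (p + 1) + (j + 1) = N
  · rw [if_pos hc]
    subst hc
    rw [show (p+1)+(j+1) - ((p+1)+(j+1)) = 0 from by omega,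
        show (p+1)+(j+1) - (p+1) - 1 - (0 - 1) = j from by omega,
        show (p+1)+(j+1) - (p+1) - 1 = j from by omega,
        show (p+1)+(j+1) - (p+1) = j + 1 from by omega,
        show (p+1)+(j+1) - 1 = p + (j+1) from by omega,
        show (p+1) - 1 = p from by omega,
        show (0:ℕ) - 1 = 0 from rfl]
    push_cast
    ring
  · rw [if_neg hc]
    have hlt : (p + 1) + (j + 1) < N := lt_of_le_of_ne hmN hc
    obtain ⟨q, rfl⟩ : ∃ q, N = (p + 1) + (j + 1) + (q + 1) := ⟨N - p - j - 3, by omega⟩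
    rw [show (p+1)+(j+1)+(q+1) - ((p+1)+(j+1)) = q + 1 from by omega,
        show (p+1)+(j+1)+(q+1) - (p+1) - 1 - (q+1-1) = j + 1 from by omega,
        show (p+1)+(j+1)+(q+1) - (p+1) - 1 = j + q + 1 from by omega,
        show (p+1)+(j+1)+(q+1) - (p+1) = (j+1) + (q+1) from by omega,
        show (p+1)+(j+1) - (p+1) = j + 1 from by omega,
        show (p+1)+(j+1) - 1 = p + (j+1) from by omega,
        show (p+1) - 1 = p from by omega,
        show q + 1 - 1 = q from by omega]
    push_cast
    ring

lemma key (N m m' : ℕ) (hN : 1 ≤ N) (hm'1 : 1 ≤ m') (hmm' : m' < m) (hmN : m ≤ N) :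
    ∃ a b : ℝ, 0 ≤ a ∧ a ≤ b ∧ b ≤ 1 ∧
      (∀ t ∈ Ioo (0:ℝ) a, deriv (fun s => H N m s - H N m' s) t ≤ 0) ∧
      (∀ t ∈ Ioo a b, 0 ≤ deriv (fun s => H N m s - H N m' s) t) ∧
      (∀ t ∈ Ioo b (1:ℝ), deriv (fun s => H N m s - H N m' s) t ≤ 0) := by
  have hm'N : m' < N := lt_of_lt_of_le hmm' hmN
  set c1 : ℝ := (N.choose m : ℝ) with hc1def
  set c0 : ℝ := (N.choose m' : ℝ) with hc0def
  have hc1 : 0 < c1 := by rw [hc1def]; exact_mod_cast Nat.choose_pos hmN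
  have hc0 : 0 < c0 := by rw [hc0def]; exact_mod_cast Nat.choose_pos hm'N.le
  set k : ℕ := m - m' with hk
  set e : ℕ := (N - m' - 1) - (N - m - 1) with he
  set K : ℝ := if m = N then 0 else (N : ℝ) with hKdef
  set Φ : ℝ → ℝ :=
    fun x => c1 * x ^ k * ((m : ℝ) - K * x) - c0 * (1 - x) ^ e * ((m' : ℝ) - (N : ℝ) * x)
    with hPhi
  have hform : ∀ t : ℝ, deriv (fun s => H N m s - H N m' s) t
      = t ^ (m' - 1) * (1 - t) ^ (N - m - 1) * Φ t := by
    intro t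
    simp only [hPhi, hk, he, hKdef, hc1def, hc0def]
    exact deriv_formula N m m' hm'1 hmm' hmN t
  have hN0 : (0:ℝ) < N := by exact_mod_cast hN
  have hm'0 : (0:ℝ) < m' := by exact_mod_cast hm'1
  have hm'm : (m':ℝ) < m := by exact_mod_cast hmm'
  have hmNr : (m:ℝ) ≤ N := by exact_mod_cast hmN
  have hK0 : 0 ≤ K := by
    rw [hKdef]; split <;> [exact le_rfl; exact hN0.le]
  have hKN : K ≤ (N:ℝ) := by
    rw [hKdef]; split <;> [exact hN0.le; exact le_rfl]
  set z : ℝ := (m' : ℝ) / N with hz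
  have hz0 : 0 < z := div_pos hm'0 hN0
  have hz1 : z < 1 := (div_lt_one hN0).2 (by exact_mod_cast hm'N)
  have hNz : (N:ℝ) * z = m' := by rw [hz]; field_simp
  have hm0 : (0:ℝ) < m := lt_trans hm'0 hm'm
  have hKz : K * z < m := by
    rw [hKdef]
    by_cases hmn : m = N
    · rw [if_pos hmn]; simpa using hm0
    · rw [if_neg hmn, hNz]; exact hm'm
  have hk0 : k ≠ 0 := by omega
  have hcontPhi : Continuous Φ := by rw [hPhi]; fun_prop
  have hmz : (m':ℝ) - (N:ℝ) * z = 0 := by rw [hNz]; ring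
  have hPhiz : 0 < Φ z := by
    have h1 : 0 < c1 * z ^ k * ((m:ℝ) - K * z) :=
      mul_pos (mul_pos hc1 (pow_pos hz0 k)) (by linarith)
    simp only [hPhi, hmz, mul_zero, sub_zero]
    exact h1
  have hPhi0 : Φ 0 ≤ 0 := by
    simp only [hPhi, zero_pow hk0, mul_zero, zero_mul, mul_one, sub_zero, one_pow]
    nlinarith [mul_pos hc0 hm'0]
  set L : Set ℝ := Icc (0:ℝ) z ∩ Φ ⁻¹' (Iic 0) with hL
  have hLclosed : IsClosed L := isClosed_Icc.inter (isClosed_Iic.preimage hcontPhi)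
  have hLne : L.Nonempty := ⟨0, ⟨le_rfl, hz0.le⟩, by simpa using hPhi0⟩
  have hLbdd : BddAbove L := ⟨z, fun x hx => hx.1.2⟩
  set a : ℝ := sSup L with ha
  have haL : a ∈ L := hLclosed.csSup_mem hLne hLbdd
  have ha0 : 0 ≤ a := haL.1.1
  have haz : a ≤ z := haL.1.2
  have hPhia : Φ a ≤ 0 := haL.2
  have hstrict : ∀ s t : ℝ, 0 < s → s < t → t ≤ z → 0 < Φ s → 0 < Φ t := by
    intro s t hs hst htz hp
    have hp' : c0 * (1 - s) ^ e * ((m':ℝ) - (N:ℝ) * s) < c1 * s ^ k * ((m:ℝ) - K * s) := by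
      simp only [hPhi] at hp; linarith
    have hNs : (N:ℝ) * s < m' := by
      have h2 : (N:ℝ) * s < (N:ℝ) * z :=
        mul_lt_mul_of_pos_left (lt_of_lt_of_le hst htz) hN0
      linarith [hNz]
    have hNt : (N:ℝ) * t ≤ m' := by
      have h2 : (N:ℝ) * t ≤ (N:ℝ) * z := mul_le_mul_of_nonneg_left htz hN0.le
      linarith [hNz]
    have hKt : K * t < m := by
      have h2 : K * t ≤ K * z := mul_le_mul_of_nonneg_left htz hK0
      linarith
    have h3 := cmp_left hc1 hc0 hK0 hKN hs hst (lt_of_le_of_lt htz hz1) hNs hNt hKt hm'm.le hp'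
    simp only [hPhi]
    linarith
  have h_left : ∀ t ∈ Ioo (0:ℝ) a, Φ t ≤ 0 := by
    intro t ht
    by_contra hcc
    push_neg at hcc
    have := hstrict t a ht.1 ht.2 haz hcc
    linarith
  have h_mid1 : ∀ t : ℝ, a < t → t ≤ z → 0 < Φ t := by
    intro t h1 h2
    by_contra hcc
    push_neg at hcc
    have htL : t ∈ L := ⟨⟨le_trans ha0 h1.le, h2⟩, by simpa using hcc⟩
    have := le_csSup hLbdd htL
    linarith
  have h_mid : ∀ t : ℝ, z ≤ t → t ≤ 1 → K * t ≤ m → 0 ≤ Φ t := by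
    intro t h1 h2 h3
    have ht0 : 0 ≤ t := hz0.le.trans h1
    have hA : 0 ≤ c1 * t ^ k * ((m:ℝ) - K * t) :=
      mul_nonneg (mul_nonneg hc1.le (pow_nonneg ht0 k)) (by linarith)
    have hNt : (m':ℝ) - (N:ℝ) * t ≤ 0 := by
      have h4 : (N:ℝ) * z ≤ (N:ℝ) * t := mul_le_mul_of_nonneg_left h1 hN0.le
      linarith [hNz]
    have hB : c0 * (1 - t) ^ e * ((m':ℝ) - (N:ℝ) * t) ≤ 0 :=
      mul_nonpos_of_nonneg_of_nonpos
        (mul_nonneg hc0.le (pow_nonneg (by linarith) e)) hNt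
    simp only [hPhi]
    linarith
  have hpre : ∀ t : ℝ, 0 < t → t < 1 → 0 ≤ t ^ (m' - 1) * (1 - t) ^ (N - m - 1) :=
    fun t h1 h2 => mul_nonneg (pow_nonneg h1.le _) (pow_nonneg (by linarith) _)
  by_cases hmn : m = N
  · refine ⟨a, 1, ha0, haz.trans hz1.le, le_rfl, ?_, ?_, ?_⟩
    · intro t ht
      rw [hform t]
      exact mul_nonpos_of_nonneg_of_nonpos
        (hpre t ht.1 (lt_of_lt_of_le ht.2 (haz.trans hz1.le))) (h_left t ht)
    · intro t ht
      have ht0 : 0 < t := lt_of_le_of_lt ha0 ht.1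
      rw [hform t]
      refine mul_nonneg (hpre t ht0 ht.2) ?_
      rcases le_or_gt t z with hlz | hlz
      · exact (h_mid1 t ht.1 hlz).le
      · refine h_mid t hlz.le ht.2.le ?_
        rw [hKdef, if_pos hmn]
        simpa using hm0.le
    · intro t ht
      exact absurd (ht.1.trans ht.2) (lt_irrefl 1)
  · have hmltN : m < N := lt_of_le_of_ne hmN hmn
    have hKN' : K = (N:ℝ) := by rw [hKdef, if_neg hmn]
    have hmNr' : (m:ℝ) < N := by exact_mod_cast hmltN
    set z' : ℝ := (m : ℝ) / N with hz'
    have hz'0 : 0 < z' := div_pos hm0 hN0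
    have hz'1 : z' < 1 := (div_lt_one hN0).2 hmNr'
    have hzz' : z ≤ z' := by
      rw [hz, hz']
      gcongr
    have hNz' : (N:ℝ) * z' = m := by rw [hz']; field_simp
    have he0 : e ≠ 0 := by omega
    have hPhi1 : Φ 1 ≤ 0 := by
      simp only [hPhi, sub_self, zero_pow he0, mul_zero, zero_mul, sub_zero, one_pow]
      nlinarith [mul_pos hc1 (sub_pos.2 hmNr')]
    set R : Set ℝ := Icc z' (1:ℝ) ∩ Φ ⁻¹' (Iic 0) with hR
    have hRclosed : IsClosed R := isClosed_Icc.inter (isClosed_Iic.preimage hcontPhi)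
    have hRne : R.Nonempty := ⟨1, ⟨hz'1.le, le_rfl⟩, by simpa using hPhi1⟩
    have hRbdd : BddBelow R := ⟨z', fun x hx => hx.1.1⟩
    set b : ℝ := sInf R with hb
    have hbR : b ∈ R := hRclosed.csInf_mem hRne hRbdd
    have hz'b : z' ≤ b := hbR.1.1
    have hb1 : b ≤ 1 := hbR.1.2
    have hPhib : Φ b ≤ 0 := hbR.2
    have hstrictR : ∀ s t : ℝ, z' ≤ s → s < t → t < 1 → 0 < Φ t → 0 < Φ s := by
      intro s t hs hst ht1 hp
      have hp' : c0 * (1 - t) ^ e * ((m':ℝ) - (N:ℝ) * t) < c1 * t ^ k * ((m:ℝ) - (N:ℝ) * t) := by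
        simp only [hPhi, hKN'] at hp; linarith
      have hNs : (m:ℝ) ≤ (N:ℝ) * s := by
        have h2 : (N:ℝ) * z' ≤ (N:ℝ) * s := mul_le_mul_of_nonneg_left hs hN0.le
        linarith [hNz']
      have h3 := cmp_right hc1 hc0 hN0 (lt_of_lt_of_le hz'0 hs) hst ht1 hNs hm'm hp'
      simp only [hPhi, hKN']
      linarith
    have h_right : ∀ t ∈ Ioo b (1:ℝ), Φ t ≤ 0 := by
      intro t ht
      by_contra hcc
      push_neg at hcc
      have := hstrictR b t hz'b ht.1 ht.2 hcc
      linarith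
    have h_mid2 : ∀ t : ℝ, z' ≤ t → t < b → 0 < Φ t := by
      intro t h1 h2
      by_contra hcc
      push_neg at hcc
      have htR : t ∈ R := ⟨⟨h1, h2.le.trans hb1⟩, by simpa using hcc⟩
      have := csInf_le hRbdd htR
      linarith
    refine ⟨a, b, ha0, le_trans haz (le_trans hzz' hz'b), hb1, ?_, ?_, ?_⟩
    · intro t ht
      rw [hform t]
      exact mul_nonpos_of_nonneg_of_nonpos
        (hpre t ht.1 (lt_of_lt_of_le ht.2 (lt_of_le_of_lt haz hz1).le)) (h_left t ht)
    · intro t ht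
      have ht0 : 0 < t := lt_of_le_of_lt ha0 ht.1
      have ht1 : t < 1 := lt_of_lt_of_le ht.2 hb1
      rw [hform t]
      refine mul_nonneg (hpre t ht0 ht1) ?_
      rcases le_or_gt t z with hlz | hlz
      · exact (h_mid1 t ht.1 hlz).le
      · rcases le_or_gt t z' with hlz' | hlz'
        · refine h_mid t hlz.le ht1.le ?_
          rw [hKN']
          have h4 : (N:ℝ) * t ≤ (N:ℝ) * z' := mul_le_mul_of_nonneg_left hlz' hN0.le
          linarith [hNz']
        · exact (h_mid2 t hlz'.le ht.2).le
    · intro t ht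
      have ht0 : 0 < t := lt_of_le_of_lt (hz'0.le.trans hz'b) ht.1
      rw [hform t]
      exact mul_nonpos_of_nonneg_of_nonpos (hpre t ht0 ht.2) (h_right t ht)

theorem down_up_down_single_crossing (N m m' : ℕ) (hN : 1 ≤ N)
    (hm'1 : 1 ≤ m') (hmm' : m' < m) (hmN : m ≤ N)
    (h : ℝ → ℝ) (S : Finset ℝ)
    (hcont : ContinuousOn h (Icc (0:ℝ) 1))
    (h0 : h 0 = 0) (h1 : 0 ≤ h 1)
    (hdiff : ∀ t ∈ Ioo (0:ℝ) 1, t ∉ S → DifferentiableAt ℝ h t)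
    (hsign : ∀ t ∈ Ioo (0:ℝ) 1, t ∉ S →
      Real.sign (deriv h t) =
        Real.sign (deriv (fun s => H N m s - H N m' s) t)) :
    ∃ tstar ∈ Icc (0:ℝ) 1,
      (∀ t ∈ Icc (0:ℝ) tstar, h t ≤ 0) ∧ (∀ t ∈ Icc tstar (1:ℝ), 0 ≤ h t) := by
  obtain ⟨a, b, ha0, hab, hb1, hP1, hP2, hP3⟩ := key N m m' hN hm'1 hmm' hmN
  have ha1 : a ≤ 1 := hab.trans hb1
  have hb0 : 0 ≤ b := ha0.trans hab
  -- h is antitone on [0,a]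
  have hanti1 : AntitoneOn h (Icc 0 a) := by
    refine antiAux h S 0 a (hcont.mono (Icc_subset_Icc le_rfl ha1)) ?_ ?_
    · exact fun t ht hts => hdiff t ⟨ht.1, lt_of_lt_of_le ht.2 ha1⟩ hts
    · exact fun t ht hts =>
        signAux_nonpos (hsign t ⟨ht.1, lt_of_lt_of_le ht.2 ha1⟩ hts) (hP1 t ht)
  -- h is monotone on [a,b]
  have hmono : MonotoneOn h (Icc a b) := by
    refine monoAux h S a b (hcont.mono (Icc_subset_Icc ha0 hb1)) ?_ ?_
    · exact fun t ht hts =>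
        hdiff t ⟨lt_of_le_of_lt ha0 ht.1, lt_of_lt_of_le ht.2 hb1⟩ hts
    · exact fun t ht hts =>
        signAux_nonneg (hsign t ⟨lt_of_le_of_lt ha0 ht.1, lt_of_lt_of_le ht.2 hb1⟩ hts)
          (hP2 t ht)
  -- h is antitone on [b,1]
  have hanti2 : AntitoneOn h (Icc b 1) := by
    refine antiAux h S b 1 (hcont.mono (Icc_subset_Icc hb0 le_rfl)) ?_ ?_
    · exact fun t ht hts => hdiff t ⟨lt_of_le_of_lt hb0 ht.1, ht.2⟩ hts
    · exact fun t ht hts =>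
        signAux_nonpos (hsign t ⟨lt_of_le_of_lt hb0 ht.1, ht.2⟩ hts) (hP3 t ht)
  have hneg : ∀ t ∈ Icc (0:ℝ) a, h t ≤ 0 := by
    intro t ht
    have := hanti1 (⟨le_rfl, ha0⟩ : (0:ℝ) ∈ Icc (0:ℝ) a) ht ht.1
    linarith [this, h0.le]
  have hpos : ∀ t ∈ Icc b (1:ℝ), 0 ≤ h t := by
    intro t ht
    have := hanti2 ht (⟨hb1, le_rfl⟩ : (1:ℝ) ∈ Icc b 1) ht.2
    linarith
  set T : Set ℝ := Icc a b ∩ h ⁻¹' (Iic 0) with hT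
  have hTclosed : IsClosed T :=
    (hcont.mono (Icc_subset_Icc ha0 hb1)).preimage_isClosed_of_isClosed
      isClosed_Icc isClosed_Iic
  have haT : a ∈ T := ⟨⟨le_rfl, hab⟩, by
    simpa using hneg a ⟨ha0, le_rfl⟩⟩
  have hTbdd : BddAbove T := ⟨b, fun x hx => hx.1.2⟩
  set tstar : ℝ := sSup T with htstar
  have htT : tstar ∈ T := hTclosed.csSup_mem ⟨a, haT⟩ hTbdd
  have hta : a ≤ tstar := htT.1.1
  have htb : tstar ≤ b := htT.1.2
  have hht : h tstar ≤ 0 := htT.2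
  have hclaim : ∀ t : ℝ, tstar < t → t ≤ b → 0 < h t := by
    intro t h1t h2t
    by_contra hcc
    push_neg at hcc
    have : t ∈ T := ⟨⟨hta.trans h1t.le, h2t⟩, by simpa using hcc⟩
    have := le_csSup hTbdd this
    linarith
  have hts0 : 0 ≤ h tstar := by
    rcases eq_or_lt_of_le htb with heq | hlt
    · rw [heq]; exact hpos b ⟨le_rfl, hb1⟩
    · have hcw : ContinuousWithinAt h (Ioc tstar b) tstar :=
        (hcont tstar ⟨ha0.trans hta, htb.trans hb1⟩).mono
          (fun x hx => ⟨(ha0.trans hta).trans hx.1.le, hx.2.trans hb1⟩)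
      have hten : Filter.Tendsto h (nhdsWithin tstar (Ioi tstar)) (nhds (h tstar)) := by
        have := hcw
        rwa [ContinuousWithinAt, nhdsWithin_Ioc_eq_nhdsGT hlt] at this
      refine ge_of_tendsto hten ?_
      filter_upwards [Ioc_mem_nhdsGT hlt] with x hx
      exact (hclaim x hx.1 hx.2).le
  refine ⟨tstar, ⟨ha0.trans hta, htb.trans hb1⟩, ?_, ?_⟩
  · intro t ht
    rcases le_or_gt t a with h2 | h2
    · exact hneg t ⟨ht.1, h2⟩
    · have := hmono (⟨h2.le, ht.2.trans htb⟩ : t ∈ Icc a b) ⟨hta, htb⟩ ht.2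
      linarith
  · intro t ht
    rcases le_or_gt t b with h2 | h2
    · rcases eq_or_lt_of_le ht.1 with heq | hlt
      · rw [← heq]; exact hts0
      · exact (hclaim t hlt h2).le
    · exact hpos t ⟨h2.le, ht.2⟩
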